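/- arXiv:1901.01644 — 2 statements merged into one kernel-verified Lean document; each statement's English description precedes it below -/
import Mathlib

section
/- Let B̃, B, P be invertible 2×2 complex matrices with B, B̃ symmetric, and let F be a 2×2 complex matrix such that PᵀBP = B̃ + F and ‖F‖ ≤ |det B̃|/(8‖B̃‖+4). Then there exists ρ ∈ ℂ with ρ² = det B̃ / det B such that |det P − ρ| ≤ ‖F‖·(4‖B̃‖+2)/√(|det B̃|·|det B|). -/
open Matrix

/-- The entrywise maximum norm `‖X‖ = max_{j,k} |x_{jk}|` on complex matrices. -/
noncomputable def maxNorm {n : ℕ} (X : Matrix (Fin n) (Fin n) ℂ) : ℝ :=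
  ((Finset.univ.sup fun p : Fin n × Fin n => ‖X p.1 p.2‖₊ : NNReal) : ℝ)

lemma maxNorm_entry_le {n : ℕ} (X : Matrix (Fin n) (Fin n) ℂ) (i j : Fin n) :
    ‖X i j‖ ≤ maxNorm X := by
  have := Finset.le_sup (f := fun p : Fin n × Fin n => ‖X p.1 p.2‖₊)
    (Finset.mem_univ (i, j))
  exact_mod_cast this

lemma maxNorm_nonneg {n : ℕ} (X : Matrix (Fin n) (Fin n) ℂ) : 0 ≤ maxNorm X :=
  NNReal.coe_nonneg _

lemma six_term_bound (a b c d e g : ℂ) :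
    ‖a + b + c - d - e - g‖ ≤ ‖a‖ + ‖b‖ + ‖c‖ + ‖d‖ + ‖e‖ + ‖g‖ := by
  calc ‖a + b + c - d - e - g‖ ≤ ‖a + b + c - d - e‖ + ‖g‖ := norm_sub_le _ _
    _ ≤ (‖a + b + c - d‖ + ‖e‖) + ‖g‖ := by gcongr; exact norm_sub_le _ _
    _ ≤ ((‖a + b + c‖ + ‖d‖) + ‖e‖) + ‖g‖ := by gcongr; exact norm_sub_le _ _
    _ ≤ (((‖a + b‖ + ‖c‖) + ‖d‖) + ‖e‖) + ‖g‖ := by gcongr; exact norm_add_le _ _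
    _ ≤ ((((‖a‖ + ‖b‖) + ‖c‖) + ‖d‖) + ‖e‖) + ‖g‖ := by gcongr; exact norm_add_le _ _

set_option maxHeartbeats 1000000 in
/-- Let `B̃, B, P` be invertible `2×2` complex matrices with `B, B̃`
symmetric, and `PᵀBP = B̃ + F` with `‖F‖ ≤ |det B̃|/(8‖B̃‖+4)`. Then there is `ρ ∈ ℂ` with
`ρ² = det B̃ / det B` and `|det P − ρ| ≤ ‖F‖·(4‖B̃‖+2)/√(|det B̃|·|det B|)`. -/
theorem det_estimate_of_perturbed_T_congruence
    (B B' P F : Matrix (Fin 2) (Fin 2) ℂ)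
    (hB : IsUnit B) (hB' : IsUnit B') (hP : IsUnit P)
    (hBs : B.IsSymm) (hB's : B'.IsSymm)
    (heq : Pᵀ * B * P = B' + F)
    (hF : maxNorm F ≤ ‖B'.det‖ / (8 * maxNorm B' + 4)) :
    ∃ ρ : ℂ, ρ ^ 2 = B'.det / B.det ∧
      ‖P.det - ρ‖ ≤ maxNorm F * (4 * maxNorm B' + 2) / Real.sqrt (‖B'.det‖ * ‖B.det‖) := by
  -- basic nonvanishing facts
  have hBdet : B.det ≠ 0 := ((Matrix.isUnit_iff_isUnit_det B).mp hB).ne_zero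
  have hB'det : B'.det ≠ 0 := ((Matrix.isUnit_iff_isUnit_det B').mp hB').ne_zero
  set b := maxNorm B' with hbdef
  set f := maxNorm F with hfdef
  set D := ‖B'.det‖ with hDdef
  set m := ‖B.det‖ with hmdef
  have hD : 0 < D := norm_pos_iff.mpr hB'det
  have hm : 0 < m := norm_pos_iff.mpr hBdet
  have hb : 0 ≤ b := maxNorm_nonneg _
  have hf : 0 ≤ f := maxNorm_nonneg _
  -- determinant identity
  have hd2 : P.det ^ 2 * B.det = (B' + F).det := by
    have := congrArg Matrix.det heq
    rw [Matrix.det_mul, Matrix.det_mul, Matrix.det_transpose] at this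
    rw [← this]; ring
  -- square root of det B' / det B
  obtain ⟨r, hr⟩ := IsAlgClosed.exists_pow_nat_eq (B'.det / B.det) (n := 2) (by norm_num)
  set d := P.det with hddef
  set ρ : ℂ := if ‖d - r‖ ≤ ‖d + r‖ then r else -r with hρdef
  have hρ2 : ρ ^ 2 = B'.det / B.det := by
    rw [hρdef]; split <;> [exact hr; simpa using hr]
  have hmin : ‖d - ρ‖ ≤ ‖d + ρ‖ := by
    rw [hρdef]; split
    · assumption
    · rename_i h
      have h' : ‖d + r‖ ≤ ‖d - r‖ := le_of_not_ge h
      simpa [sub_neg_eq_add, ← sub_eq_add_neg] using h'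
  refine ⟨ρ, hρ2, ?_⟩
  -- key complex identities
  have hρB : ρ ^ 2 * B.det = B'.det := by
    rw [hρ2]; field_simp
  have hprod : (d - ρ) * (d + ρ) * B.det = (B' + F).det - B'.det := by
    linear_combination hd2 - hρB
  set Δ := (B' + F).det - B'.det with hΔdef
  set x := ‖d - ρ‖ with hxdef
  set s := ‖d + ρ‖ with hsdef
  set t := ‖ρ‖ with htdef
  have hxs : x * s * m = ‖Δ‖ := by
    rw [hxdef, hsdef, hmdef, ← norm_mul, ← norm_mul, hprod]
  have ht2 : t ^ 2 * m = D := by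
    have : ‖ρ ^ 2 * B.det‖ = ‖(B'.det : ℂ)‖ := by rw [hρB]
    rw [norm_mul, norm_pow] at this
    exact this
  have ht : 0 < t := by
    by_contra h
    push_neg at h
    have : t = 0 := le_antisymm h (norm_nonneg _)
    rw [this] at ht2
    nlinarith
  -- entrywise bound on Δ
  have hDelta : ‖Δ‖ ≤ 4 * b * f + 2 * f ^ 2 := by
    have hE : Δ = B' 0 0 * F 1 1 + F 0 0 * B' 1 1 + F 0 0 * F 1 1
        - B' 0 1 * F 1 0 - F 0 1 * B' 1 0 - F 0 1 * F 1 0 := by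
      rw [hΔdef]
      simp [Matrix.det_fin_two, Matrix.add_apply]
      ring
    rw [hE]
    have h1 := six_term_bound (B' 0 0 * F 1 1) (F 0 0 * B' 1 1) (F 0 0 * F 1 1)
      (B' 0 1 * F 1 0) (F 0 1 * B' 1 0) (F 0 1 * F 1 0)
    refine h1.trans ?_
    have e1 : ‖B' 0 0 * F 1 1‖ ≤ b * f := by
      rw [norm_mul]; exact mul_le_mul (maxNorm_entry_le _ _ _) (maxNorm_entry_le _ _ _) (norm_nonneg _) hb
    have e2 : ‖F 0 0 * B' 1 1‖ ≤ f * b := by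
      rw [norm_mul]; exact mul_le_mul (maxNorm_entry_le _ _ _) (maxNorm_entry_le _ _ _) (norm_nonneg _) hf
    have e3 : ‖F 0 0 * F 1 1‖ ≤ f * f := by
      rw [norm_mul]; exact mul_le_mul (maxNorm_entry_le _ _ _) (maxNorm_entry_le _ _ _) (norm_nonneg _) hf
    have e4 : ‖B' 0 1 * F 1 0‖ ≤ b * f := by
      rw [norm_mul]; exact mul_le_mul (maxNorm_entry_le _ _ _) (maxNorm_entry_le _ _ _) (norm_nonneg _) hb
    have e5 : ‖F 0 1 * B' 1 0‖ ≤ f * b := by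
      rw [norm_mul]; exact mul_le_mul (maxNorm_entry_le _ _ _) (maxNorm_entry_le _ _ _) (norm_nonneg _) hf
    have e6 : ‖F 0 1 * F 1 0‖ ≤ f * f := by
      rw [norm_mul]; exact mul_le_mul (maxNorm_entry_le _ _ _) (maxNorm_entry_le _ _ _) (norm_nonneg _) hf
    nlinarith
  -- det B' bound
  have hD2b : D ≤ 2 * b ^ 2 := by
    have : D = ‖B' 0 0 * B' 1 1 - B' 0 1 * B' 1 0‖ := by
      rw [hDdef, Matrix.det_fin_two]
    rw [this]
    have h1 : ‖B' 0 0 * B' 1 1 - B' 0 1 * B' 1 0‖ ≤ ‖B' 0 0 * B' 1 1‖ + ‖B' 0 1 * B' 1 0‖ :=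
      norm_sub_le _ _
    have e1 : ‖B' 0 0 * B' 1 1‖ ≤ b * b := by
      rw [norm_mul]; exact mul_le_mul (maxNorm_entry_le _ _ _) (maxNorm_entry_le _ _ _) (norm_nonneg _) hb
    have e2 : ‖B' 0 1 * B' 1 0‖ ≤ b * b := by
      rw [norm_mul]; exact mul_le_mul (maxNorm_entry_le _ _ _) (maxNorm_entry_le _ _ _) (norm_nonneg _) hb
    nlinarith
  -- from hF : f ≤ D / (8b+4), get f*(8b+4) ≤ D
  have hF' : f * (8 * b + 4) ≤ D := by
    have h84 : (0:ℝ) < 8 * b + 4 := by linarith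
    rw [le_div_iff₀ h84] at hF
    exact hF
  have h2t : 2 * t ≤ s + x := by
    have h0 : ‖(d + ρ) - (d - ρ)‖ ≤ s + x := norm_sub_le _ _
    have h2 : (d + ρ) - (d - ρ) = 2 * ρ := by ring
    rw [h2, norm_mul] at h0
    simpa [htdef] using h0
  have hx0 : 0 ≤ x := norm_nonneg _
  have hs0 : 0 ≤ s := norm_nonneg _
  clear_value x s t m D b f Δ d ρ
  clear hd2 hprod heq hρ2 hρB hr hF hxdef hsdef htdef hmdef hDdef hbdef hfdef hΔdef hddef hρdef hBdet hB'det
  -- f ≤ b/4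
  have hfb : f ≤ b / 4 := by nlinarith
  -- ‖Δ‖ ≤ (9/16) D
  have hΔD : ‖Δ‖ ≤ (9/16) * D := by nlinarith
  -- x ≤ (3/4) t
  have hx34 : x ≤ (3/4) * t := by
    have hxx : x * x * m ≤ x * s * m := by
      have h1 : x * x ≤ x * s := mul_le_mul_of_nonneg_left hmin hx0
      exact mul_le_mul_of_nonneg_right h1 hm.le
    rw [hxs] at hxx
    have : x ^ 2 * m ≤ (9/16) * (t ^ 2 * m) := by nlinarith [hΔD, ht2]
    have hx2 : x ^ 2 ≤ (9/16) * t ^ 2 := by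
      have := (mul_le_mul_iff_of_pos_right hm).mp (by nlinarith : x ^ 2 * m ≤ ((9/16) * t ^ 2) * m)
      exact this
    have h := Real.sqrt_le_sqrt hx2
    rw [Real.sqrt_sq hx0] at h
    have h34 : ((3:ℝ)/4*t)^2 = 9/16*t^2 := by ring
    rw [← h34, Real.sqrt_sq (by positivity)] at h
    exact h
  -- s ≥ (5/4) t
  have hs : (5/4) * t ≤ s := by linarith
  -- final bound
  have hS : Real.sqrt (D * m) = t * m := by
    have h1 : (t * m) ^ 2 = D * m := by
      calc (t * m) ^ 2 = (t ^ 2 * m) * m := by ring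
        _ = D * m := by rw [ht2]
    rw [← h1, Real.sqrt_sq (mul_nonneg ht.le hm.le)]
  have hSpos : 0 < t * m := mul_pos ht hm
  have key : x * (t * m) ≤ f * (4 * b + 2) := by
    have h1 : x * ((5/4) * t) * m ≤ x * s * m := by
      have h0 : x * ((5/4) * t) ≤ x * s := mul_le_mul_of_nonneg_left hs hx0
      exact mul_le_mul_of_nonneg_right h0 hm.le
    rw [hxs] at h1
    -- (4/5)‖Δ‖ ≤ f (4b+2)
    have hf2 : f * f ≤ (b / 4) * f := mul_le_mul_of_nonneg_right hfb hf
    have hbf : 0 ≤ b * f := mul_nonneg hb hf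
    have h2 : (4/5) * ‖Δ‖ ≤ f * (4 * b + 2) := by nlinarith [hDelta, hf2, hbf, hf]
    nlinarith [h1, h2]
  calc x ≤ f * (4 * b + 2) / (t * m) := (le_div_iff₀ hSpos).mpr key
    _ = f * (4 * b + 2) / Real.sqrt (D * m) := by rw [hS]
end

section
/- Let 0 ≤ τ ≤ 1 and let M(τ) be the 2×2 complex matrix with rows (0,1) and (τ,0). Then for every c ∈ ℂ with |c| = 1 and every P ∈ GL₂(ℂ) one has ‖c·P*P − M(τ)‖ ≥ 1/3 in the entrywise maximum norm. In particular, M(τ) does not lie in the closure of the Ψ₁-orbit of the identity matrix I₂. -/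
open Matrix

lemma key_cs (P : Matrix (Fin 2) (Fin 2) ℂ) :
    ‖(Pᴴ * P) 0 1‖ ^ 2 ≤ ‖(Pᴴ * P) 0 0‖ * ‖(Pᴴ * P) 1 1‖ := by
  set u : EuclideanSpace ℂ (Fin 2) := WithLp.toLp 2 (fun i => P i 0) with hu
  set v : EuclideanSpace ℂ (Fin 2) := WithLp.toLp 2 (fun i => P i 1) with hv
  have h01 : (Pᴴ * P) 0 1 = inner ℂ u v := by
    simp [Matrix.mul_apply, Matrix.conjTranspose_apply, PiLp.inner_apply, hu, hv]; ring
  have h00 : (Pᴴ * P) 0 0 = inner ℂ u u := by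
    rw [hu, PiLp.inner_apply]; simp [Matrix.mul_apply, Matrix.conjTranspose_apply, mul_comm, Complex.mul_conj']
  have h11 : (Pᴴ * P) 1 1 = inner ℂ v v := by
    rw [hv, PiLp.inner_apply]; simp [Matrix.mul_apply, Matrix.conjTranspose_apply, mul_comm, Complex.mul_conj']
  have hnu : ‖(inner ℂ u u : ℂ)‖ = ‖u‖ ^ 2 := by
    rw [inner_self_eq_norm_sq_to_K]; simp [norm_pow]
  have hnv : ‖(inner ℂ v v : ℂ)‖ = ‖v‖ ^ 2 := by
    rw [inner_self_eq_norm_sq_to_K]; simp [norm_pow]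
  rw [h01, h00, h11, hnu, hnv]
  calc ‖(inner ℂ u v : ℂ)‖ ^ 2 ≤ (‖u‖ * ‖v‖) ^ 2 := by
        gcongr; exact norm_inner_le_norm u v
    _ = ‖u‖ ^ 2 * ‖v‖ ^ 2 := by ring

lemma core (c : ℂ) (P : Matrix (Fin 2) (Fin 2) ℂ) (hc : ‖c‖ = 1) :
    ¬ (‖(c • (Pᴴ * P)) 0 0‖ < 1/3 ∧ ‖(c • (Pᴴ * P)) 1 1‖ < 1/3 ∧
       ‖(c • (Pᴴ * P)) 0 1 - 1‖ < 1/3) := by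
  rintro ⟨h00, h11, h01⟩
  have hsm : ∀ j k : Fin 2, ‖(c • (Pᴴ * P)) j k‖ = ‖(Pᴴ * P) j k‖ := by
    intro j k; simp [Matrix.smul_apply, norm_smul, hc]
  rw [hsm] at h00 h11
  have hge : (2:ℝ)/3 ≤ ‖(Pᴴ * P) 0 1‖ := by
    have h2 := norm_sub_norm_le (1 : ℂ) ((c • (Pᴴ * P)) 0 1)
    rw [norm_one, norm_sub_rev] at h2
    rw [← hsm 0 1]
    linarith
  have := key_cs P
  nlinarith [norm_nonneg ((Pᴴ * P) 0 0), norm_nonneg ((Pᴴ * P) 1 1)]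

lemma entry_le_maxNorm {n : ℕ} (X : Matrix (Fin n) (Fin n) ℂ) (j k : Fin n) :
    ‖X j k‖ ≤ maxNorm X := by
  have h : ‖X j k‖₊ ≤ Finset.univ.sup fun p : Fin n × Fin n => ‖X p.1 p.2‖₊ := by
    have := Finset.le_sup (f := fun p : Fin n × Fin n => ‖X p.1 p.2‖₊)
      (Finset.mem_univ (j, k))
    simpa using this
  calc ‖X j k‖ = ((‖X j k‖₊ : NNReal) : ℝ) := (coe_nnnorm _).symm
    _ ≤ maxNorm X := NNReal.coe_le_coe.mpr h

/-- For `0 ≤ τ ≤ 1` and `M(τ) = [[0,1],[τ,0]]`, one has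
`‖c·P*P − M(τ)‖ ≥ 1/3` for every `|c| = 1` and `P ∈ GL₂(ℂ)`; in particular `M(τ)` does
not lie in the closure of the `Ψ₁`-orbit of the identity matrix `I₂`. -/
theorem M_tau_far_from_orbit_of_identity (τ : ℝ) (h0 : 0 ≤ τ) (h1 : τ ≤ 1) :
    (∀ (c : ℂ) (P : Matrix (Fin 2) (Fin 2) ℂ), ‖c‖ = 1 → IsUnit P →
      (1 : ℝ) / 3 ≤ maxNorm (c • (Pᴴ * P) - !![(0 : ℂ), 1; (τ : ℂ), 0])) ∧
    (!![(0 : ℂ), 1; (τ : ℂ), 0]) ∉ closure {X : Matrix (Fin 2) (Fin 2) ℂ |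
        ∃ (c : ℂ) (P : Matrix (Fin 2) (Fin 2) ℂ), ‖c‖ = 1 ∧ IsUnit P ∧
          X = c • (Pᴴ * (1 : Matrix (Fin 2) (Fin 2) ℂ) * P)} := by
  constructor
  · intro c P hc _
    by_contra h
    push_neg at h
    set Y := c • (Pᴴ * P) - !![(0 : ℂ), 1; (τ : ℂ), 0] with hY
    apply core c P hc
    have e00 : Y 0 0 = (c • (Pᴴ * P)) 0 0 := by simp [hY, Matrix.sub_apply]
    have e11 : Y 1 1 = (c • (Pᴴ * P)) 1 1 := by simp [hY, Matrix.sub_apply]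
    have e01 : Y 0 1 = (c • (Pᴴ * P)) 0 1 - 1 := by simp [hY, Matrix.sub_apply]
    refine ⟨?_, ?_, ?_⟩
    · rw [← e00]; exact lt_of_le_of_lt (entry_le_maxNorm Y 0 0) h
    · rw [← e11]; exact lt_of_le_of_lt (entry_le_maxNorm Y 1 1) h
    · rw [← e01]; exact lt_of_le_of_lt (entry_le_maxNorm Y 0 1) h
  · intro hmem
    have hcont : ∀ j k : Fin 2, Continuous fun X : Matrix (Fin 2) (Fin 2) ℂ => X j k :=
      fun j k => (continuous_apply k).comp (continuous_apply j)
    set U : Set (Matrix (Fin 2) (Fin 2) ℂ) :=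
      {X | ‖X 0 0‖ < 1/3 ∧ ‖X 1 1‖ < 1/3 ∧ ‖X 0 1 - 1‖ < 1/3} with hU
    have hUopen : IsOpen U := by
      apply IsOpen.inter
      · exact isOpen_lt ((hcont 0 0).norm) continuous_const
      apply IsOpen.inter
      · exact isOpen_lt ((hcont 1 1).norm) continuous_const
      · exact isOpen_lt (((hcont 0 1).sub continuous_const).norm) continuous_const
    have hMU : (!![(0 : ℂ), 1; (τ : ℂ), 0]) ∈ U := by
      constructor
      · norm_num
      constructor
      · norm_num
      · norm_num
    obtain ⟨X, hXU, c, P, hc, hP, rfl⟩ :=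
      (mem_closure_iff.mp hmem) U hUopen hMU
    rw [Matrix.mul_one] at hXU
    exact core c P hc hXU
end
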